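/- Let k be a field and u, v ∈ k. If (X₀, X₁, X₂, X₃) ∈ k⁴ satisfies the equations of Q₁ (namely X₃² + X₁X₃ = (X₀ + uX₁ − vX₂)X₁ and X₁² = X₀X₂), then the quadruple ψ(X₀,X₁,X₂,X₃) = ((X₀ − vX₂)², (X₀ − vX₂)X₁, X₁², vX₁X₂ + (X₀ + vX₂)X₃) satisfies the equations of Q₂ (namely X₃² + X₁X₃ = (X₀ + 4vX₂)(X₁ + uX₂) + vX₂² and X₁² = X₀X₂). Moreover ψ(1,0,0,0) = (1,0,0,0) and ψ(0,0,1,0) = v²·(1,0,0,0), so the kernel point T = (0:0:1:0) maps to the identity (1:0:0:0). -/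
import Mathlib


/-- The tuple of quadratic forms defining the 2-isogeny `ψ : Q₁ → Q₂`
with kernel generated by `(0:0:1:0)`. -/
def psiIsog {k : Type*} [Field k] (v : k) :
    k × k × k × k → k × k × k × k :=
  fun P =>
    ((P.1 - v * P.2.2.1) ^ 2,
     (P.1 - v * P.2.2.1) * P.2.1,
     P.2.1 ^ 2,
     v * P.2.1 * P.2.2.1 + (P.1 + v * P.2.2.1) * P.2.2.2)

/-- The 2-isogeny `ψ` maps points of `Q₁` to points of `Q₂`, sends the
identity `(1:0:0:0)` to itself, and sends the kernel point
`T = (0:0:1:0)` to `v²·(1:0:0:0)`, i.e. to the identity. -/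
theorem psi_maps_Q1_to_Q2 {k : Type*} [Field k] (u v : k)
    (X₀ X₁ X₂ X₃ : k)
    (h1 : X₃ ^ 2 + X₁ * X₃ = (X₀ + u * X₁ - v * X₂) * X₁)
    (h2 : X₁ ^ 2 = X₀ * X₂) :
    (let Y := psiIsog v (X₀, X₁, X₂, X₃)
     Y.2.2.2 ^ 2 + Y.2.1 * Y.2.2.2 =
        (Y.1 + 4 * v * Y.2.2.1) * (Y.2.1 + u * Y.2.2.1) +
          v * Y.2.2.1 ^ 2 ∧
     Y.2.1 ^ 2 = Y.1 * Y.2.2.1) ∧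
    psiIsog v ((1 : k), 0, 0, 0) = (1, 0, 0, 0) ∧
    psiIsog v ((0 : k), 0, 1, 0) = (v ^ 2, 0, 0, 0) := by
  refine ⟨⟨?_, ?_⟩, ?_, ?_⟩
  · show (v * X₁ * X₂ + (X₀ + v * X₂) * X₃) ^ 2 + _ = _
    simp only [psiIsog]
    linear_combination (X₀^2 + 2*v*X₀*X₂ + v^2*X₂^2) * h1 +
      (-4*v*X₀*X₁ + 4*v^2*X₁*X₂ - 4*u*v*X₁^2 - v*X₁^2) * h2
  · simp only [psiIsog]; ring
  · simp only [psiIsog]; norm_num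
  · simp only [psiIsog]; norm_num
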